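/- In A, the Casimir element C q-commutes with e: e·C = q·C·e. -/
import Mathlib

/-- the Casimir element `C = 2·e·f − h + (q/2)·h²` q-commutes with `e`:
`e·C = q·C·e`. -/
theorem jz_casimir_qcommutes_e {A : Type*} [Ring A] [Algebra ℂ A]
    (q : ℂ) (hq : q ≠ 0) (e f h : A)
    (rel1 : q • (h * e) - e * h = 2 * e)
    (rel2 : h * f - q • (f * h) = -(2 * f))
    (rel3 : e * f - q • (f * e) = h + ((1 - q) / 4) • h ^ 2)
    (C : A) (hC : C = 2 * (e * f) - h + (q / 2) • h ^ 2) :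
    e * C = q • (C * e) := by
  subst hC
  have z3 : (e * f - q • (f * e)) - (h + ((1 - q) / 4) • h ^ 2) = 0 := sub_eq_zero.mpr rel3
  have z1 : (q • (h * e) - e * h) - 2 * e = 0 := sub_eq_zero.mpr rel1
  have key : e * (2 * (e * f) - h + (q / 2) • h ^ 2)
      - q • ((2 * (e * f) - h + (q / 2) • h ^ 2) * e)
      = 2 * e * ((e * f - q • (f * e)) - (h + ((1 - q) / 4) • h ^ 2))
        - (q / 2) • (h * ((q • (h * e) - e * h) - 2 * e))
        - (2 : ℂ)⁻¹ • (((q • (h * e) - e * h) - 2 * e) * h) := by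
    noncomm_ring
    match_scalars <;> (simp [zsmul_eq_mul, nsmul_eq_mul]; try ring)
  rw [z3, z1] at key
  simp only [mul_zero, zero_mul, smul_zero, sub_zero, mul_zero] at key
  exact sub_eq_zero.mp key
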